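/- An n×n complex matrix A which is not normal has normal defect 1 (i.e., admits a normal completion of size (n+1)×(n+1)) if and only if there exist an n×n contraction C, a diagonal matrix D ∈ ℂ^{n×n}, and a scalar μ ∈ ℂ such that A = C D C* + μ I, where C is the upper-left n×n block of some unitary (n+1)×(n+1) matrix. -/

import Mathlib

open Matrix

open Module.End

set_option maxHeartbeats 1000000


theorem exists_joint_eigenbasis {E : Type*} [NormedAddCommGroup E] [InnerProductSpace ℂ E]
    [FiniteDimensional ℂ E] {S T : E →ₗ[ℂ] E} (hS : S.IsSymmetric) (hT : T.IsSymmetric)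
    (hST : Commute S T) {N : ℕ} (hn : Module.finrank ℂ E = N) :
    ∃ b : OrthonormalBasis (Fin N) ℂ E,
      ∀ j, ∃ α γ : ℂ, S (b j) = α • b j ∧ T (b j) = γ • b j := by
  classical
  set V : ℂ × ℂ → Submodule ℂ E := fun i => eigenspace S i.2 ⊓ eigenspace T i.1 with hV
  have hInt := LinearMap.IsSymmetric.directSum_isInternal_of_commute hS hT hST
  have orthFam := LinearMap.IsSymmetric.orthogonalFamily_eigenspace_inf_eigenspace hS hT
  rw [DirectSum.isInternal_submodule_iff_iSupIndep_and_iSup_eq_top] at hInt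
  obtain ⟨hind, hsup⟩ := hInt
  haveI : Fintype {i : ℂ × ℂ // V i ≠ ⊥} := hind.fintypeNeBotOfFiniteDimensional
  have hInt' : DirectSum.IsInternal (fun i : {i : ℂ × ℂ // V i ≠ ⊥} => V i.1) := by
    apply DirectSum.isInternal_submodule_of_iSupIndep_of_iSup_eq_top
    · exact hind.comp Subtype.val_injective
    · rw [iSup_ne_bot_subtype, hsup]
  have orthFam' : OrthogonalFamily ℂ (fun i : {i : ℂ × ℂ // V i ≠ ⊥} => ↥(V i.1))
      (fun i => (V i.1).subtypeₗᵢ) := orthFam.comp Subtype.val_injective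
  refine ⟨hInt'.subordinateOrthonormalBasis hn orthFam', fun j => ?_⟩
  have hmem := hInt'.subordinateOrthonormalBasis_subordinate hn j orthFam'
  set χ := hInt'.subordinateOrthonormalBasisIndex hn j orthFam'
  refine ⟨(χ.1).2, (χ.1).1, ?_, ?_⟩
  · exact Module.End.mem_eigenspace_iff.mp hmem.1
  · exact Module.End.mem_eigenspace_iff.mp hmem.2

theorem normal_spectral {m : Type*} [Fintype m] [DecidableEq m] (B : Matrix m m ℂ)
    (hB : Bᴴ * B = B * Bᴴ) :
    ∃ (U : Matrix m m ℂ) (d : m → ℂ), Uᴴ * U = 1 ∧ U * Uᴴ = 1 ∧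
      B = U * Matrix.diagonal d * Uᴴ := by
  classical
  set H : Matrix m m ℂ := (1/2 : ℂ) • (B + Bᴴ) with hHdef
  set K : Matrix m m ℂ := (Complex.I/2) • (Bᴴ - B) with hKdef
  have hstar2 : star (1/2 : ℂ) = (1/2 : ℂ) := by simp [Complex.ext_iff]
  have hstarI : star (Complex.I/2 : ℂ) = -(Complex.I/2) := by
    simp [Complex.ext_iff]; norm_num
  have hHherm : H.IsHermitian := by
    simp only [Matrix.IsHermitian, hHdef, Matrix.conjTranspose_smul, Matrix.conjTranspose_add,
      Matrix.conjTranspose_conjTranspose, hstar2]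
    rw [add_comm]
  have hKherm : K.IsHermitian := by
    simp only [Matrix.IsHermitian, hKdef, Matrix.conjTranspose_smul, Matrix.conjTranspose_sub,
      Matrix.conjTranspose_conjTranspose, hstarI]
    rw [show (B - Bᴴ) = -(Bᴴ - B) by abel, neg_smul, smul_neg, neg_neg]
  have hBHK : B = H + Complex.I • K := by
    ext i j
    simp only [hHdef, hKdef, Matrix.add_apply, Matrix.smul_apply, smul_eq_mul,
      Matrix.sub_apply]
    linear_combination (B i j - Bᴴ i j)/2 * Complex.I_sq
  have hkey : (B + Bᴴ) * (Bᴴ - B) = (Bᴴ - B) * (B + Bᴴ) := by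
    simp only [add_mul, mul_sub, sub_mul, mul_add]
    rw [hB]
    abel
  have hHK : H * K = K * H := by
    rw [hHdef, hKdef, Matrix.smul_mul, Matrix.mul_smul, Matrix.mul_smul, Matrix.smul_mul,
      smul_smul, smul_smul, mul_comm, hkey]
  -- pass to linear maps on Euclidean space
  have hHsym : (Matrix.toEuclideanLin H).IsSymmetric :=
    Matrix.isHermitian_iff_isSymmetric.mp hHherm
  have hKsym : (Matrix.toEuclideanLin K).IsSymmetric :=
    Matrix.isHermitian_iff_isSymmetric.mp hKherm
  have hmul : ∀ X Y : Matrix m m ℂ,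
      Matrix.toEuclideanLin (X * Y) = Matrix.toEuclideanLin X * Matrix.toEuclideanLin Y := by
    intro X Y
    rw [Matrix.toEuclideanLin_eq_toLin, Matrix.toLin_mul _ (PiLp.basisFun 2 ℂ m) _,
      Module.End.mul_eq_comp]
  have hcomm : Commute (Matrix.toEuclideanLin H) (Matrix.toEuclideanLin K) := by
    unfold Commute SemiconjBy
    rw [← hmul, ← hmul, hHK]
  have hn : Module.finrank ℂ (EuclideanSpace ℂ m) = Fintype.card m := finrank_euclideanSpace
  obtain ⟨b0, hb0⟩ := exists_joint_eigenbasis hHsym hKsym hcomm hn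
  choose α γ hα hγ using hb0
  let e : Fin (Fintype.card m) ≃ m := Fintype.equivOfCardEq (Fintype.card_fin _)
  let b : OrthonormalBasis m ℂ (EuclideanSpace ℂ m) := b0.reindex e
  let d : m → ℂ := fun j => α (e.symm j) + Complex.I * γ (e.symm j)
  have hBv : ∀ j, Matrix.toEuclideanLin B (b j) = d j • (b j) := by
    intro j
    have h1 : Matrix.toEuclideanLin H (b j) = α (e.symm j) • b j := by
      simpa [b, OrthonormalBasis.coe_reindex] using hα (e.symm j)
    have h2 : Matrix.toEuclideanLin K (b j) = γ (e.symm j) • b j := by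
      simpa [b, OrthonormalBasis.coe_reindex] using hγ (e.symm j)
    have hsplit : Matrix.toEuclideanLin B
        = Matrix.toEuclideanLin H + Complex.I • Matrix.toEuclideanLin K := by
      rw [hBHK, map_add, LinearEquiv.map_smul, LinearEquiv.map_smul]
    rw [hsplit]
    simp only [LinearMap.add_apply, LinearMap.smul_apply]
    rw [h1, h2, smul_smul, ← add_smul]
  have hBmul : ∀ j, B *ᵥ ⇑(b j) = d j • ⇑(b j) := by
    intro j
    simpa only [Matrix.toEuclideanLin_apply, WithLp.ofLp_smul] using congr(⇑$(hBv j))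
  let U : Matrix m m ℂ := (EuclideanSpace.basisFun m ℂ).toBasis.toMatrix b.toBasis
  have hU : U ∈ Matrix.unitaryGroup m ℂ :=
    (EuclideanSpace.basisFun m ℂ).toMatrix_orthonormalBasis_mem_unitary b
  have hsU : Uᴴ * U = 1 := by
    rw [← Matrix.star_eq_conjTranspose]
    exact Matrix.mem_unitaryGroup_iff'.mp hU
  have hUs : U * Uᴴ = 1 := by
    rw [← Matrix.star_eq_conjTranspose]
    exact Matrix.mem_unitaryGroup_iff.mp hU
  have hUmulvec : ∀ j, U *ᵥ Pi.single j 1 = ⇑(b j) := by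
    intro j
    simp only [Matrix.mulVec_single, mul_one, MulOpposite.op_one, one_smul]
    rfl
  have hstarU : ∀ j, Uᴴ *ᵥ ⇑(b j) = Pi.single j 1 := by
    intro j
    rw [← hUmulvec, Matrix.mulVec_mulVec, hsU, Matrix.one_mulVec]
  have hdiag : Uᴴ * B * U = Matrix.diagonal d := by
    apply Matrix.toEuclideanLin.injective
    apply Module.Basis.ext (EuclideanSpace.basisFun m ℂ).toBasis
    intro i
    simp only [Matrix.toEuclideanLin_apply, OrthonormalBasis.coe_toBasis,
      EuclideanSpace.basisFun_apply, EuclideanSpace.ofLp_single, ← Matrix.mulVec_mulVec,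
      hUmulvec, hBmul, Matrix.mulVec_smul, hstarU, Matrix.diagonal_mulVec_single,
      mul_one]
    apply PiLp.ext
    intro j
    simp only [PiLp.smul_apply, Pi.smul_apply, Pi.single_apply, EuclideanSpace.single_apply, smul_eq_mul, mul_ite, mul_one,
      mul_zero]
  refine ⟨U, d, hsU, hUs, ?_⟩
  have hre : U * (Uᴴ * B * U) * Uᴴ = (U * Uᴴ) * B * (U * Uᴴ) := by noncomm_ring
  rw [← hdiag, hre, hUs, Matrix.one_mul, Matrix.mul_one]

lemma block_of_unitary {p q : Type*} [Fintype p] [Fintype q] [DecidableEq p] [DecidableEq q]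
    (U : Matrix (p ⊕ q) (p ⊕ q) ℂ) (hUs : U * Uᴴ = 1) :
    U.toBlocks₁₁ * U.toBlocks₁₁ᴴ + U.toBlocks₁₂ * U.toBlocks₁₂ᴴ = 1 := by
  have h := hUs
  rw [← fromBlocks_toBlocks U, fromBlocks_conjTranspose, fromBlocks_multiply,
    ← fromBlocks_one (l := p) (m := q)] at h
  have h11 := congrArg Matrix.toBlocks₁₁ h
  rwa [Matrix.toBlocks_fromBlocks₁₁, Matrix.toBlocks_fromBlocks₁₁] at h11

lemma dot_self_eq_sum_normSq {ι : Type*} [Fintype ι] (x : ι → ℂ) :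
    star x ⬝ᵥ x = ((∑ i, Complex.normSq (x i) : ℝ) : ℂ) := by
  unfold dotProduct
  push_cast
  apply Finset.sum_congr rfl
  intro i _
  simp only [Pi.star_apply, Complex.star_def]
  rw [mul_comm, Complex.mul_conj]

lemma contraction_of_block (n : ℕ) (C : Matrix (Fin n) (Fin n) ℂ)
    (U : Matrix (Fin n ⊕ Fin 1) (Fin n ⊕ Fin 1) ℂ) (hU : Uᴴ * U = 1) (hblk : U.toBlocks₁₁ = C)
    (v : Fin n → ℂ) : ∑ i, Complex.normSq ((C *ᵥ v) i) ≤ ∑ i, Complex.normSq (v i) := by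
  set w : (Fin n ⊕ Fin 1) → ℂ := Sum.elim v 0 with hw
  have hnorm : star (U *ᵥ w) ⬝ᵥ (U *ᵥ w) = star w ⬝ᵥ w := by
    rw [Matrix.star_mulVec, Matrix.dotProduct_mulVec, Matrix.vecMul_vecMul, hU,
      Matrix.vecMul_one]
  rw [dot_self_eq_sum_normSq, dot_self_eq_sum_normSq] at hnorm
  have h1 : ∑ j, Complex.normSq ((U *ᵥ w) j) = ∑ j, Complex.normSq (w j) := by
    exact_mod_cast hnorm
  have hUw : ∀ i, (U *ᵥ w) (Sum.inl i) = (C *ᵥ v) i := by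
    intro i
    conv_lhs => rw [← fromBlocks_toBlocks U, hw, Matrix.fromBlocks_mulVec]
    simp [hblk]
  calc ∑ i, Complex.normSq ((C *ᵥ v) i)
      ≤ ∑ j, Complex.normSq ((U *ᵥ w) j) := by
        rw [Fintype.sum_sum_type]
        simp only [hUw]
        exact le_add_of_nonneg_right (Finset.sum_nonneg fun _ _ => Complex.normSq_nonneg _)
    _ = ∑ j, Complex.normSq (w j) := h1
    _ = ∑ i, Complex.normSq (v i) := by
        rw [Fintype.sum_sum_type]
        simp [hw]

theorem stmt4 (n : ℕ) (A : Matrix (Fin n) (Fin n) ℂ)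
    (hA : ¬ Aᴴ * A = A * Aᴴ) :
    (∃ B : Matrix (Fin n ⊕ Fin 1) (Fin n ⊕ Fin 1) ℂ,
        Bᴴ * B = B * Bᴴ ∧ B.toBlocks₁₁ = A) ↔
      ∃ (C D : Matrix (Fin n) (Fin n) ℂ) (μ : ℂ),
        (∀ v : Fin n → ℂ, ∑ i, Complex.normSq ((C *ᵥ v) i) ≤ ∑ i, Complex.normSq (v i)) ∧
        (∃ U : Matrix (Fin n ⊕ Fin 1) (Fin n ⊕ Fin 1) ℂ,
            Uᴴ * U = 1 ∧ U.toBlocks₁₁ = C) ∧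
        D.IsDiag ∧
        A = C * D * Cᴴ + μ • (1 : Matrix (Fin n) (Fin n) ℂ) := by
  constructor
  · rintro ⟨B, hBnorm, hblk⟩
    obtain ⟨U, d, hsU, hUs, hBeq⟩ := normal_spectral B hBnorm
    set C := U.toBlocks₁₁ with hC
    set c := U.toBlocks₁₂ with hc
    set lam := d (Sum.inr 0) with hlam
    refine ⟨C, Matrix.diagonal (fun i => d (Sum.inl i) - lam), lam,
      fun v => contraction_of_block n C U hsU rfl v, ⟨U, hsU, rfl⟩,
      Matrix.isDiag_diagonal _, ?_⟩
    -- block computation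
    have hdiag : Matrix.diagonal d = fromBlocks (Matrix.diagonal (d ∘ Sum.inl)) 0 0
        (Matrix.diagonal (d ∘ Sum.inr)) := by
      rw [Matrix.fromBlocks_diagonal]
      exact congrArg Matrix.diagonal (Sum.elim_comp_inl_inr d).symm
    have hD2 : Matrix.diagonal (d ∘ Sum.inr) = lam • (1 : Matrix (Fin 1) (Fin 1) ℂ) := by
      rw [Matrix.smul_one_eq_diagonal]
      refine congrArg Matrix.diagonal (funext fun i => ?_)
      fin_cases i
      rfl
    have hblock : A = C * Matrix.diagonal (d ∘ Sum.inl) * Cᴴ + lam • (c * cᴴ) := by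
      rw [← hblk, hBeq]
      conv_lhs => rw [← fromBlocks_toBlocks U, hdiag, fromBlocks_conjTranspose,
        fromBlocks_multiply, fromBlocks_multiply]
      simp only [Matrix.toBlocks_fromBlocks₁₁, Matrix.mul_zero, Matrix.zero_mul, add_zero,
        zero_add, hD2]
      rw [Matrix.mul_smul, Matrix.smul_mul, Matrix.mul_one]
    have hsum : C * Cᴴ + c * cᴴ = 1 := block_of_unitary U hUs
    have hcc : c * cᴴ = 1 - C * Cᴴ := by
      rw [← hsum]; abel
    rw [hblock, hcc]
    have hDsplit : Matrix.diagonal (fun i => d (Sum.inl i) - lam)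
        = Matrix.diagonal (d ∘ Sum.inl) - lam • 1 := by
      rw [Matrix.smul_one_eq_diagonal, Matrix.diagonal_sub]
      rfl
    rw [hDsplit]
    have hexp : C * (Matrix.diagonal (d ∘ Sum.inl) - lam • 1) * Cᴴ
        = C * Matrix.diagonal (d ∘ Sum.inl) * Cᴴ - lam • (C * Cᴴ) := by
      rw [Matrix.mul_sub, Matrix.sub_mul, Matrix.mul_smul, Matrix.smul_mul, Matrix.mul_one]
    rw [hexp, smul_sub]
    abel
  · rintro ⟨C, D, μ, _hcontr, ⟨U, hU, hblk⟩, hDdiag, hAeq⟩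
    have hUs : U * Uᴴ = 1 := by
      rw [← Matrix.star_eq_conjTranspose] at hU ⊢
      exact mul_eq_one_comm.mp hU
    set f : (Fin n ⊕ Fin 1) → ℂ := Sum.elim (fun i => D i i + μ) (fun _ => μ) with hf
    refine ⟨U * Matrix.diagonal f * Uᴴ, ?_, ?_⟩
    · -- normality
      have hct : (U * Matrix.diagonal f * Uᴴ)ᴴ = U * Matrix.diagonal (star f) * Uᴴ := by
        simp [Matrix.conjTranspose_mul, Matrix.diagonal_conjTranspose, Matrix.mul_assoc]
      rw [hct]
      calc (U * Matrix.diagonal (star f) * Uᴴ) * (U * Matrix.diagonal f * Uᴴ)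
          = U * (Matrix.diagonal (star f) * (Uᴴ * U) * Matrix.diagonal f) * Uᴴ := by
            simp only [Matrix.mul_assoc]
        _ = U * (Matrix.diagonal (star f) * Matrix.diagonal f) * Uᴴ := by
            rw [hU, Matrix.mul_one]
        _ = U * (Matrix.diagonal f * Matrix.diagonal (star f)) * Uᴴ := by
            rw [Matrix.diagonal_mul_diagonal, Matrix.diagonal_mul_diagonal]
            simp only [Pi.star_apply]
            have : (fun i => star (f i) * f i) = fun i => f i * star (f i) :=
              funext fun i => mul_comm _ _
            rw [this]
        _ = U * (Matrix.diagonal f * (Uᴴ * U) * Matrix.diagonal (star f)) * Uᴴ := by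
            rw [hU, Matrix.mul_one]
        _ = (U * Matrix.diagonal f * Uᴴ) * (U * Matrix.diagonal (star f) * Uᴴ) := by
            simp only [Matrix.mul_assoc]
    · -- top-left block is A
      set c := U.toBlocks₁₂ with hc
      have hdiag : Matrix.diagonal f = fromBlocks (Matrix.diagonal (fun i => D i i + μ)) 0 0
          (Matrix.diagonal (fun _ => μ)) := by
        rw [Matrix.fromBlocks_diagonal]
      have hD1 : Matrix.diagonal (fun i : Fin n => D i i + μ) = D + μ • 1 := by
        rw [Matrix.smul_one_eq_diagonal]
        conv_rhs => rw [← hDdiag.diagonal_diag]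
        rw [← Matrix.diagonal_add]
        rfl
      have hD2 : Matrix.diagonal (fun _ : Fin 1 => μ) = μ • (1 : Matrix (Fin 1) (Fin 1) ℂ) := by
        rw [Matrix.smul_one_eq_diagonal]
      have hsum : C * Cᴴ + c * cᴴ = 1 := by
        have := block_of_unitary U hUs
        rwa [hblk, ← hc] at this
      conv_lhs => rw [← fromBlocks_toBlocks U, hdiag, fromBlocks_conjTranspose,
        fromBlocks_multiply, fromBlocks_multiply]
      simp only [Matrix.toBlocks_fromBlocks₁₁, Matrix.mul_zero, Matrix.zero_mul, add_zero,
        zero_add, hD1, hD2, hblk, ← hc]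
      rw [Matrix.mul_smul, Matrix.smul_mul, Matrix.mul_one]
      rw [Matrix.mul_add, Matrix.add_mul, Matrix.mul_smul, Matrix.smul_mul, Matrix.mul_one]
      rw [hAeq, ← hsum]
      rw [smul_add]
      abel
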